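/- Let m, n be positive integers, let A be the transfer matrix for width m, and let σ_c be the all-covered signature (covered, covered, …, covered). Then the domination polynomial of the m×n grid graph satisfies G_{m×n}(z) = Σ_σ (A^n)_{σ,σ_c}, where the sum runs over all signatures σ of length m that contain no uncovered symbol. -/

import Mathlib

open scoped Classical
open Polynomial

/-- The three possible states of a vertex relative to a vertex subset. -/
inductive VState : Type
  | unc | cov | occ
  deriving DecidableEq

instance : Fintype VState :=
  Fintype.ofList [VState.unc, VState.cov, VState.occ] (by intro x; cases x <;> simp)

/-- `S` is a dominating set of `G`: every vertex is in `S` or adjacent to a vertex of `S`. -/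
def IsDominating {V : Type*} (G : SimpleGraph V) (S : Finset V) : Prop :=
  ∀ v : V, v ∈ S ∨ ∃ u ∈ S, G.Adj u v

/-- The domination polynomial of `G`. -/
noncomputable def domPoly {V : Type*} [Fintype V] (G : SimpleGraph V) : Polynomial ℤ :=
  ∑ S ∈ Finset.univ.filter (fun S : Finset V => IsDominating G S),
    (X : Polynomial ℤ) ^ S.card

/-- The m×n grid graph `P_m □ P_n`; the vertex `(i, j)` lies in column `i` and row `j`. -/
def gridGraph (m n : ℕ) : SimpleGraph (Fin m × Fin n) :=
  (SimpleGraph.pathGraph m).boxProd (SimpleGraph.pathGraph n)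

/-- A signature of length `m`: a string over {unc, cov, occ} with no adjacent
(unc, occ) or (occ, unc) pair. -/
def IsSignature {m : ℕ} (σ : Fin m → VState) : Prop :=
  ∀ i : Fin m, ∀ h : (i : ℕ) + 1 < m,
    ¬(σ i = VState.unc ∧ σ ⟨(i : ℕ) + 1, h⟩ = VState.occ) ∧
    ¬(σ i = VState.occ ∧ σ ⟨(i : ℕ) + 1, h⟩ = VState.unc)

/-- `τ` is compatible with `σ`. -/
def Compatible {m : ℕ} (τ σ : Fin m → VState) : Prop :=
  ∀ i : Fin m,
    (σ i = VState.unc → τ i = VState.occ) ∧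
    (σ i = VState.occ → τ i = VState.cov ∨ τ i = VState.occ) ∧
    (τ i = VState.cov → σ i = VState.occ ∨
      (∃ j : Fin m, (j : ℕ) + 1 = (i : ℕ) ∧ τ j = VState.occ) ∨
      (∃ j : Fin m, (i : ℕ) + 1 = (j : ℕ) ∧ τ j = VState.occ))

/-- The number of occupied symbols of a signature. -/
def occCount {m : ℕ} (σ : Fin m → VState) : ℕ :=
  (Finset.univ.filter fun i => σ i = VState.occ).card

/-- The type of signatures of length `m`. -/
abbrev Signature (m : ℕ) := {σ : Fin m → VState // IsSignature σ}

/-- The transfer matrix for width `m`, over ℤ[z], indexed by signatures of length `m`. -/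
noncomputable def transferMatrix (m : ℕ) :
    Matrix (Signature m) (Signature m) (Polynomial ℤ) :=
  fun τ σ =>
    if Compatible τ.1 σ.1 then (X : Polynomial ℤ) ^ occCount τ.1 else 0

/-- The all-covered signature `(cov, cov, …, cov)`. -/
def allCov (m : ℕ) : Fin m → VState := fun _ => VState.cov

lemma allCov_isSignature (m : ℕ) : IsSignature (allCov m) := by
  intro i h
  constructor <;> rintro ⟨h1, h2⟩ <;> simp [allCov] at h1

section Aux

variable {m n : ℕ}

/-- vertex (i,j) is dominated by an occupied vertex in its own column or the column to
its left. -/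
def domBefore (S : Finset (Fin m × Fin n)) (i : Fin m) (j : Fin n) : Prop :=
  (∃ j' : Fin n, (j' : ℕ) + 1 = (j : ℕ) ∧ (i, j') ∈ S) ∨
  (∃ i' : Fin m, ((i' : ℕ) + 1 = (i : ℕ) ∨ (i : ℕ) + 1 = (i' : ℕ)) ∧ (i', j) ∈ S)

noncomputable def colState (S : Finset (Fin m × Fin n)) (j : Fin n) : Fin m → VState :=
  fun i => if (i, j) ∈ S then VState.occ
    else if domBefore S i j then VState.cov else VState.unc

lemma colState_eq_occ {S : Finset (Fin m × Fin n)} {j : Fin n} {i : Fin m} :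
    colState S j i = VState.occ ↔ (i, j) ∈ S := by
  unfold colState; split_ifs <;> simp_all

lemma colState_eq_cov {S : Finset (Fin m × Fin n)} {j : Fin n} {i : Fin m} :
    colState S j i = VState.cov ↔ ((i, j) ∉ S ∧ domBefore S i j) := by
  unfold colState; split_ifs <;> simp_all

lemma colState_eq_unc {S : Finset (Fin m × Fin n)} {j : Fin n} {i : Fin m} :
    colState S j i = VState.unc ↔ ((i, j) ∉ S ∧ ¬ domBefore S i j) := by
  unfold colState; split_ifs <;> simp_all

lemma grid_adj {u v : Fin m × Fin n} : (gridGraph m n).Adj u v ↔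
    ((((u.1 : ℕ) + 1 = v.1 ∨ (v.1 : ℕ) + 1 = u.1) ∧ u.2 = v.2) ∨
     (((u.2 : ℕ) + 1 = v.2 ∨ (v.2 : ℕ) + 1 = u.2) ∧ u.1 = v.1)) := by
  obtain ⟨a, b⟩ := u; obtain ⟨c, d⟩ := v
  simp [gridGraph, SimpleGraph.boxProd_adj, SimpleGraph.pathGraph_adj]

lemma dominated_cases {S : Finset (Fin m × Fin n)}
    (hS : IsDominating (gridGraph m n) S) (i : Fin m) (j : Fin n) (h : (i, j) ∉ S) :
    domBefore S i j ∨ ∃ j' : Fin n, (j : ℕ) + 1 = (j' : ℕ) ∧ (i, j') ∈ S := by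
  rcases hS (i, j) with h' | ⟨⟨a, b⟩, hu, hadj⟩
  · exact absurd h' h
  rw [grid_adj] at hadj
  rcases hadj with ⟨hv, hb⟩ | ⟨hh, ha⟩
  · -- vertical neighbour in same column
    refine Or.inl (Or.inr ⟨a, ?_, ?_⟩)
    · rcases hv with h1 | h1 <;> simp_all
    · simpa [show b = j from hb] using hu
  · -- horizontal neighbour
    rcases hh with h1 | h1
    · exact Or.inl (Or.inl ⟨b, h1, by simpa [show a = i from ha] using hu⟩)
    · exact Or.inr ⟨b, h1, by simpa [show a = i from ha] using hu⟩

lemma colState_isSignature (S : Finset (Fin m × Fin n)) (j : Fin n) :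
    IsSignature (colState S j) := by
  intro i h
  constructor
  · rintro ⟨h1, h2⟩
    rw [colState_eq_unc] at h1
    rw [colState_eq_occ] at h2
    exact h1.2 (Or.inr ⟨⟨(i : ℕ) + 1, h⟩, Or.inr rfl, h2⟩)
  · rintro ⟨h1, h2⟩
    rw [colState_eq_occ] at h1
    rw [colState_eq_unc] at h2
    exact h2.2 (Or.inr ⟨i, Or.inl rfl, h1⟩)

noncomputable def chain (S : Finset (Fin m × Fin n)) (k : Fin (n + 1)) : Fin m → VState :=
  if h : (k : ℕ) = 0 then allCov m
  else colState S ⟨(k : ℕ) - 1, by have := k.isLt; omega⟩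

lemma chain_zero (S : Finset (Fin m × Fin n)) : chain S 0 = allCov m := by
  simp [chain]

lemma chain_succ (S : Finset (Fin m × Fin n)) (j : Fin n) :
    chain S j.succ = colState S j := by
  simp only [chain, Fin.val_succ]
  rw [dif_neg (by omega)]
  congr 1

lemma chain_isSignature (S : Finset (Fin m × Fin n)) (k : Fin (n + 1)) :
    IsSignature (chain S k) := by
  unfold chain
  split
  · exact allCov_isSignature m
  · exact colState_isSignature S _

noncomputable def chainSig (S : Finset (Fin m × Fin n)) (k : Fin (n + 1)) : Signature m :=
  ⟨chain S k, chain_isSignature S k⟩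

lemma compat_chain {S : Finset (Fin m × Fin n)}
    (hS : IsDominating (gridGraph m n) S) (k : Fin n) :
    Compatible (chain S k.succ) (chain S k.castSucc) := by
  rw [chain_succ]
  intro i
  by_cases hk : (k : ℕ) = 0
  · have hσ : chain S k.castSucc = allCov m := by
      unfold chain
      rw [dif_pos (by simpa using hk)]
    rw [hσ]
    refine ⟨by simp [allCov], by simp [allCov], ?_⟩
    intro hcov
    rw [colState_eq_cov] at hcov
    rcases hcov.2 with ⟨j', hj', _⟩ | ⟨i', hi', hmem⟩
    · omega
    · rcases hi' with h1 | h1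
      · exact Or.inr (Or.inl ⟨i', h1, colState_eq_occ.2 hmem⟩)
      · exact Or.inr (Or.inr ⟨i', h1, colState_eq_occ.2 hmem⟩)
  · have hklt := k.isLt
    set jp : Fin n := ⟨(k : ℕ) - 1, by omega⟩ with hjp
    have hσ : chain S k.castSucc = colState S jp := by
      unfold chain
      rw [dif_neg (by simpa using hk)]
      congr 1
    rw [hσ]
    have hjk : (jp : ℕ) + 1 = (k : ℕ) := by simp [hjp]; omega
    refine ⟨?_, ?_, ?_⟩
    · intro hu
      rw [colState_eq_unc] at hu
      rcases dominated_cases hS i jp hu.1 with hd | ⟨j', hj', hmem⟩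
      · exact absurd hd hu.2
      · have hj : j' = k := Fin.ext (by omega)
        rw [colState_eq_occ]
        rwa [← hj]
    · intro ho
      rw [colState_eq_occ] at ho
      have hdb : domBefore S i k := Or.inl ⟨jp, hjk, ho⟩
      by_cases hmem : (i, k) ∈ S
      · exact Or.inr (colState_eq_occ.2 hmem)
      · exact Or.inl (colState_eq_cov.2 ⟨hmem, hdb⟩)
    · intro hcov
      rw [colState_eq_cov] at hcov
      rcases hcov.2 with ⟨j', hj', hmem⟩ | ⟨i', hi', hmem⟩
      · left
        rw [colState_eq_occ]
        have hj : j' = jp := Fin.ext (by simp [hjp]; omega)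
        rwa [← hj]
      · rcases hi' with h1 | h1
        · exact Or.inr (Or.inl ⟨i', h1, colState_eq_occ.2 hmem⟩)
        · exact Or.inr (Or.inr ⟨i', h1, colState_eq_occ.2 hmem⟩)

lemma last_no_unc {S : Finset (Fin m × Fin n)}
    (hS : IsDominating (gridGraph m n) S) (hn : 0 < n) (i : Fin m) :
    chain S (Fin.last n) i ≠ VState.unc := by
  intro hu
  unfold chain at hu
  rw [dif_neg (by simpa using hn.ne')] at hu
  rw [colState_eq_unc] at hu
  rcases dominated_cases hS i _ hu.1 with hd | ⟨j', hj', hmem⟩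
  · exact hu.2 hd
  · have := j'.isLt
    simp only [Fin.val_last] at hj'
    omega

lemma occCount_colState (S : Finset (Fin m × Fin n)) (k : Fin n) :
    occCount (colState S k) = (S.filter fun p => p.2 = k).card := by
  unfold occCount
  apply Finset.card_bij (fun i _ => (i, k))
  · intro i hi
    rw [Finset.mem_filter] at hi ⊢
    exact ⟨colState_eq_occ.1 hi.2, rfl⟩
  · intro a _ b _ hab
    simpa using congrArg Prod.fst hab
  · rintro ⟨a, b⟩ hp
    rw [Finset.mem_filter] at hp
    have hb : b = k := hp.2
    subst hb
    exact ⟨a, by simp [colState_eq_occ, hp.1], rfl⟩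

lemma sum_occCount (S : Finset (Fin m × Fin n)) :
    ∑ k : Fin n, occCount (colState S k) = S.card := by
  rw [Finset.card_eq_sum_card_fiberwise (f := fun p : Fin m × Fin n => p.2)
    (t := Finset.univ) (fun x _ => Finset.mem_univ x.2)]
  exact Finset.sum_congr rfl fun k _ => occCount_colState S k

noncomputable def toSet (f : Fin (n + 1) → Signature m) : Finset (Fin m × Fin n) :=
  Finset.univ.filter fun p => (f p.2.succ).1 p.1 = VState.occ

lemma mem_toSet {f : Fin (n + 1) → Signature m} {p : Fin m × Fin n} :
    p ∈ toSet f ↔ (f p.2.succ).1 p.1 = VState.occ := by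
  simp [toSet]

lemma recover (f : Fin (n + 1) → Signature m) (hf0 : (f 0).1 = allCov m)
    (hcomp : ∀ k : Fin n, Compatible (f k.succ).1 (f k.castSucc).1) (j : Fin n) :
    (f j.succ).1 = colState (toSet f) j := by
  funext i
  cases hv : (f j.succ).1 i with
  | unc =>
    rw [eq_comm, colState_eq_unc]
    constructor
    · rw [mem_toSet]
      show ¬ (f j.succ).1 i = VState.occ
      rw [hv]; simp
    · rintro (⟨j', hj', hm⟩ | ⟨i', hi', hm⟩)
      · rw [mem_toSet] at hm
        have hcast : j'.succ = j.castSucc := Fin.ext (by simp [hj'])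
        have h2 := ((hcomp j) i).2.1 (by rw [← hcast]; exact hm)
        rw [hv] at h2
        rcases h2 with h | h <;> exact VState.noConfusion h
      · rw [mem_toSet] at hm
        rcases hi' with h1 | h1
        · have hlt : (i' : ℕ) + 1 < m := by have := i.isLt; omega
          have hsig := (f j.succ).2 i' hlt
          exact hsig.2 ⟨hm, by rw [show (⟨(i' : ℕ) + 1, hlt⟩ : Fin m) = i from Fin.ext h1]; exact hv⟩
        · have hlt : (i : ℕ) + 1 < m := by have := i'.isLt; omega
          have hsig := (f j.succ).2 i hlt
          exact hsig.1 ⟨hv, by rw [show (⟨(i : ℕ) + 1, hlt⟩ : Fin m) = i' from Fin.ext h1]; exact hm⟩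
  | cov =>
    rw [eq_comm, colState_eq_cov]
    refine ⟨by rw [mem_toSet]; show ¬ (f j.succ).1 i = VState.occ; rw [hv]; simp, ?_⟩
    rcases ((hcomp j) i).2.2 hv with h | ⟨jj, hjj, hocc⟩ | ⟨jj, hjj, hocc⟩
    · by_cases hj0 : (j : ℕ) = 0
      · exfalso
        have hc : j.castSucc = 0 := Fin.ext (by simpa using hj0)
        rw [hc, hf0] at h
        simp [allCov] at h
      · have hjlt := j.isLt
        refine Or.inl ⟨⟨(j : ℕ) - 1, by omega⟩, by simp; omega, ?_⟩
        rw [mem_toSet]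
        show (f (Fin.succ ⟨(j : ℕ) - 1, by omega⟩)).1 i = VState.occ
        have hcast : Fin.succ (⟨(j : ℕ) - 1, by omega⟩ : Fin n) = j.castSucc :=
          Fin.ext (by simp; omega)
        rw [hcast]; exact h
    · exact Or.inr ⟨jj, Or.inl hjj, mem_toSet.2 hocc⟩
    · exact Or.inr ⟨jj, Or.inr hjj, mem_toSet.2 hocc⟩
  | occ =>
    rw [eq_comm, colState_eq_occ, mem_toSet]
    exact hv

lemma toSet_dominating (f : Fin (n + 1) → Signature m) (hf0 : (f 0).1 = allCov m)
    (hcomp : ∀ k : Fin n, Compatible (f k.succ).1 (f k.castSucc).1)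
    (hlast : ∀ i, (f (Fin.last n)).1 i ≠ VState.unc) :
    IsDominating (gridGraph m n) (toSet f) := by
  rintro ⟨i, j⟩
  by_cases h : (i, j) ∈ toSet f
  · exact Or.inl h
  right
  cases hv : (f j.succ).1 i with
  | occ => exact absurd (mem_toSet.2 hv) h
  | unc =>
    have hne : j.succ ≠ Fin.last n := by
      intro he
      rw [he] at hv
      exact hlast i hv
    have hlt : (j : ℕ) + 1 < n := by
      have h1 := j.isLt
      have h2 : (j : ℕ) + 1 ≠ n := fun hh => hne (Fin.ext (by simp [hh]))
      omega
    have hcast : Fin.castSucc (⟨(j : ℕ) + 1, hlt⟩ : Fin n) = j.succ := Fin.ext (by simp)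
    have hocc := ((hcomp ⟨(j : ℕ) + 1, hlt⟩) i).1 (by rw [hcast]; exact hv)
    refine ⟨(i, ⟨(j : ℕ) + 1, hlt⟩), mem_toSet.2 hocc, ?_⟩
    rw [grid_adj]
    exact Or.inr ⟨Or.inr rfl, rfl⟩
  | cov =>
    rcases ((hcomp j) i).2.2 hv with hocc | ⟨jj, hjj, hocc⟩ | ⟨jj, hjj, hocc⟩
    · by_cases hj0 : (j : ℕ) = 0
      · exfalso
        have hc : j.castSucc = 0 := Fin.ext (by simpa using hj0)
        rw [hc, hf0] at hocc
        simp [allCov] at hocc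
      · have hjlt := j.isLt
        have hcast : Fin.succ (⟨(j : ℕ) - 1, by omega⟩ : Fin n) = j.castSucc :=
          Fin.ext (by simp; omega)
        refine ⟨(i, ⟨(j : ℕ) - 1, by omega⟩), mem_toSet.2 (by rw [hcast]; exact hocc), ?_⟩
        rw [grid_adj]
        exact Or.inr ⟨Or.inl (by simp; omega), rfl⟩
    · refine ⟨(jj, j), mem_toSet.2 hocc, ?_⟩
      rw [grid_adj]
      exact Or.inl ⟨Or.inl hjj, rfl⟩
    · refine ⟨(jj, j), mem_toSet.2 hocc, ?_⟩
      rw [grid_adj]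
      exact Or.inl ⟨Or.inr hjj, rfl⟩

lemma toSet_chainSig (S : Finset (Fin m × Fin n)) : toSet (chainSig S) = S := by
  ext ⟨i, j⟩
  rw [mem_toSet]
  show chain S j.succ i = VState.occ ↔ _
  rw [chain_succ, colState_eq_occ]

lemma pow_apply_paths {ι : Type*} [Fintype ι] [DecidableEq ι] (A : Matrix ι ι (Polynomial ℤ)) :
    ∀ (N : ℕ) (i j : ι), (A ^ N) i j =
      ∑ f ∈ Finset.univ.filter
          (fun f : Fin (N + 1) → ι => f 0 = j ∧ f (Fin.last N) = i),
        ∏ k : Fin N, A (f k.succ) (f k.castSucc) := by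
  intro N
  induction N with
  | zero =>
    intro i j
    rw [pow_zero, Matrix.one_apply]
    by_cases h : i = j
    · subst h
      have hset : (Finset.univ.filter
          (fun f : Fin 1 → ι => f 0 = i ∧ f (Fin.last 0) = i)) = {fun _ => i} := by
        ext f
        have h0 : Fin.last 0 = 0 := rfl
        simp only [Finset.mem_filter, Finset.mem_univ, true_and, Finset.mem_singleton, h0,
          and_self]
        constructor
        · intro hf
          funext x
          have : x = 0 := Subsingleton.elim _ _
          rw [this]; exact hf
        · intro hf; rw [hf]
      rw [hset]
      simp
    · have hset : (Finset.univ.filter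
          (fun f : Fin 1 → ι => f 0 = j ∧ f (Fin.last 0) = i)) = ∅ := by
        ext f
        simp only [Finset.mem_filter, Finset.mem_univ, true_and, Finset.notMem_empty, iff_false,
          not_and]
        intro h1 h2
        exact h (h2 ▸ h1 ▸ rfl)
      rw [hset]
      simp [h]
  | succ N ih =>
    intro i j
    rw [pow_succ, Matrix.mul_apply]
    simp_rw [ih, Finset.sum_mul]
    have step1 : ∀ k : ι,
        (∑ g ∈ Finset.univ.filter
            (fun g : Fin (N + 1) → ι => g 0 = k ∧ g (Fin.last N) = i),
          (∏ t : Fin N, A (g t.succ) (g t.castSucc)) * A k j) =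
        ∑ g ∈ (Finset.univ.filter
            (fun g : Fin (N + 1) → ι => g (Fin.last N) = i)).filter (fun g => g 0 = k),
          (∏ t : Fin N, A (g t.succ) (g t.castSucc)) * A (g 0) j := by
      intro k
      rw [Finset.filter_filter]
      apply Finset.sum_congr
      · congr 1
        ext g
        exact and_comm
      · intro g hg
        rw [Finset.mem_filter] at hg
        rw [hg.2.2]
    rw [Finset.sum_congr rfl (fun k _ => step1 k)]
    rw [Finset.sum_fiberwise_eq_sum_filter
      (Finset.filter (fun g : Fin (N + 1) → ι => g (Fin.last N) = i) Finset.univ)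
      Finset.univ (fun g => g 0)
      (fun g => (∏ t : Fin N, A (g t.succ) (g t.castSucc)) * A (g 0) j)]
    simp only [Finset.mem_univ, Finset.filter_true]
    apply Finset.sum_nbij' (i := fun g => Fin.cons j g) (j := fun f => f ∘ Fin.succ)
    · intro g hg
      rw [Finset.mem_filter] at hg ⊢
      refine ⟨Finset.mem_univ _, Fin.cons_zero _ _, ?_⟩
      rw [show Fin.last (N + 1) = (Fin.last N).succ from rfl, Fin.cons_succ]
      exact hg.2
    · intro f hf
      rw [Finset.mem_filter] at hf ⊢
      refine ⟨Finset.mem_univ _, ?_⟩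
      show f ((Fin.last N).succ) = i
      rw [show (Fin.last N).succ = Fin.last (N + 1) from rfl]
      exact hf.2.2
    · intro g _
      funext t
      simp [Fin.cons_succ]
    · intro f hf
      rw [Finset.mem_filter] at hf
      funext t
      rcases Fin.eq_zero_or_eq_succ t with h0 | ⟨t', rfl⟩
      · rw [h0, Fin.cons_zero, hf.2.1]
      · rw [Fin.cons_succ]; rfl
    · intro g _
      rw [Fin.prod_univ_succ]
      simp only [Fin.cons_succ, ← Fin.succ_castSucc, Fin.castSucc_zero, Fin.cons_zero]
      rw [mul_comm]

end Aux

/-- The domination polynomial of the m×n grid equals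
`Σ_σ (A^n)_{σ,σ_c}`, the sum over all signatures `σ` of length `m` with no uncovered
symbol, where `A` is the transfer matrix and `σ_c` is the all-covered signature. -/
theorem grid_domPoly_eq_transferMatrix_pow (m n : ℕ) (hm : 0 < m) (hn : 0 < n) :
    domPoly (gridGraph m n) =
      ∑ σ ∈ Finset.univ.filter (fun σ : Signature m => ∀ i, σ.1 i ≠ VState.unc),
        (transferMatrix m ^ n) σ ⟨allCov m, allCov_isSignature m⟩ := by
  set σc : Signature m := ⟨allCov m, allCov_isSignature m⟩ with hσc
  -- Step 1: expand the matrix power as a sum over paths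
  simp only [pow_apply_paths (transferMatrix m) n]
  -- Step 2: merge the double sum
  have hmerge : ∀ σ : Signature m,
      (Finset.univ.filter (fun f : Fin (n + 1) → Signature m =>
        f 0 = σc ∧ f (Fin.last n) = σ)) =
      (Finset.univ.filter (fun f : Fin (n + 1) → Signature m =>
        f 0 = σc)).filter (fun f => f (Fin.last n) = σ) := by
    intro σ
    rw [Finset.filter_filter]
  rw [Finset.sum_congr rfl (fun σ _ => by rw [hmerge σ])]
  rw [Finset.sum_fiberwise_eq_sum_filter
    (Finset.univ.filter (fun f : Fin (n + 1) → Signature m => f 0 = σc))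
    (Finset.univ.filter (fun σ : Signature m => ∀ i, σ.1 i ≠ VState.unc))
    (fun f => f (Fin.last n))
    (fun f => ∏ k : Fin n, transferMatrix m (f k.succ) (f k.castSucc))]
  rw [Finset.filter_filter]
  -- Step 3: restrict to compatible chains (other terms vanish)
  rw [← Finset.sum_filter_of_ne (p := fun f : Fin (n + 1) → Signature m =>
      ∀ k : Fin n, Compatible (f k.succ).1 (f k.castSucc).1)
    (by
      intro f _ hne
      by_contra hc
      push_neg at hc
      obtain ⟨k, hk⟩ := hc
      exact hne (Finset.prod_eq_zero (Finset.mem_univ k)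
        (by simp [transferMatrix, hk])))]
  rw [Finset.filter_filter]
  -- Step 4: bijection with dominating sets
  unfold domPoly
  apply Finset.sum_nbij' (i := fun S => chainSig S) (j := fun f => toSet f)
  · -- chains of dominating sets are good chains
    intro S hS
    rw [Finset.mem_filter] at hS ⊢
    refine ⟨Finset.mem_univ _, ⟨?_, ?_⟩, ?_⟩
    · exact Subtype.ext (chain_zero S)
    · rw [Finset.mem_filter]
      exact ⟨Finset.mem_univ _, fun i => last_no_unc hS.2 hn i⟩
    · intro k
      show Compatible (chain S k.succ) (chain S k.castSucc)
      exact compat_chain hS.2 k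
  · -- good chains give dominating sets
    intro f hf
    rw [Finset.mem_filter] at hf ⊢
    obtain ⟨-, ⟨hf0, hflast⟩, hcomp⟩ := hf
    rw [Finset.mem_filter] at hflast
    refine ⟨Finset.mem_univ _, ?_⟩
    exact toSet_dominating f (by rw [hf0]) hcomp hflast.2
  · intro S _
    exact toSet_chainSig S
  · intro f hf
    rw [Finset.mem_filter] at hf
    obtain ⟨-, ⟨hf0, _⟩, hcomp⟩ := hf
    have hf0' : (f 0).1 = allCov m := by rw [hf0]
    funext k
    apply Subtype.ext
    show chain (toSet f) k = (f k).1
    rcases Fin.eq_zero_or_eq_succ k with h0 | ⟨k', rfl⟩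
    · rw [h0, chain_zero, hf0']
    · rw [chain_succ, ← recover f hf0' hcomp k']
  · -- the weights agree
    intro S hS
    rw [Finset.mem_filter] at hS
    have hcc : ∀ k : Fin n,
        transferMatrix m (chainSig S k.succ) (chainSig S k.castSucc) =
          (X : Polynomial ℤ) ^ occCount (colState S k) := by
      intro k
      show (if Compatible (chain S k.succ) (chain S k.castSucc) then
          (X : Polynomial ℤ) ^ occCount (chain S k.succ) else 0) = _
      rw [if_pos (compat_chain hS.2 k), chain_succ]
    rw [Finset.prod_congr rfl (fun k _ => hcc k), Finset.prod_pow_eq_pow_sum,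
      sum_occCount]
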